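/- Let M be a compact metric space and w_j^{(n)} nonnegative weights summing to 1. Suppose for every bounded measurable f : M → ℝ, ∑_j w_j^{(n)} f(Y_j) → E[f(Y) | X] in probability. Then the weighted empirical measure Pₙ := ∑_j w_j^{(n)} δ_{Y_j} converges in probability, in bounded-Lipschitz distance, to the conditional law of Y given X. -/

import Mathlib

open MeasureTheory Filter

lemma stmt19_aux_compact {M : Type*} [MetricSpace M] [CompactSpace M] :
    IsCompact {f : C(M, ℝ) | LipschitzWith 1 f ∧ ∀ y, |f y| ≤ 1} := by
  set S : Set C(M, ℝ) := {f | LipschitzWith 1 f ∧ ∀ y, |f y| ≤ 1} with hSdef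
  apply ArzelaAscoli.isCompact_of_equicontinuous
  · have himg : ContinuousMap.toFun '' S =
        {f : M → ℝ | (∀ x y, dist (f x) (f y) ≤ dist x y) ∧ ∀ y, f y ∈ Set.Icc (-1:ℝ) 1} := by
      ext f
      constructor
      · rintro ⟨g, ⟨hg1, hg2⟩, rfl⟩
        refine ⟨fun x y => ?_, fun y => ?_⟩
        · simpa using hg1.dist_le_mul x y
        · simpa [Set.mem_Icc, ← abs_le] using hg2 y
      · rintro ⟨h1, h2⟩
        have hlip : LipschitzWith 1 f :=
          LipschitzWith.of_dist_le_mul (fun x y => by simpa using h1 x y)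
        exact ⟨⟨f, hlip.continuous⟩, ⟨hlip, fun y => by simpa [abs_le, Set.mem_Icc] using h2 y⟩, rfl⟩
    rw [himg]
    have hcpt : IsCompact (Set.pi Set.univ fun _ : M => Set.Icc (-1:ℝ) 1) :=
      isCompact_univ_pi fun _ => isCompact_Icc
    apply hcpt.of_isClosed_subset
    · apply IsClosed.inter
      · have : {f : M → ℝ | ∀ x y, dist (f x) (f y) ≤ dist x y} =
            ⋂ x, ⋂ y, {f : M → ℝ | dist (f x) (f y) ≤ dist x y} := by
          ext f; simp
        show IsClosed {f : M → ℝ | ∀ x y, dist (f x) (f y) ≤ dist x y}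
        rw [this]
        exact isClosed_iInter fun x => isClosed_iInter fun y =>
          isClosed_le (Continuous.dist (continuous_apply x) (continuous_apply y)) continuous_const
      · have : {f : M → ℝ | ∀ y, f y ∈ Set.Icc (-1:ℝ) 1} =
            ⋂ y, {f : M → ℝ | f y ∈ Set.Icc (-1:ℝ) 1} := by
          ext f; simp
        show IsClosed {f : M → ℝ | ∀ y, f y ∈ Set.Icc (-1:ℝ) 1}
        rw [this]
        exact isClosed_iInter fun y => isClosed_Icc.preimage (continuous_apply y)
    · intro f hf
      rw [Set.mem_univ_pi]
      exact fun y => hf.2 y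
  · apply Metric.equicontinuous_of_continuity_modulus id tendsto_id
    intro x y i
    simpa using i.2.1.dist_le_mul x y

theorem stmt19 {Ω M : Type*} [MeasureSpace Ω]
    [IsProbabilityMeasure (volume : Measure Ω)]
    [MetricSpace M] [CompactSpace M] [MeasurableSpace M] [BorelSpace M]
    (Y : ℕ → Ω → M) (w : (n : ℕ) → Fin n → Ω → ℝ)
    (hw0 : ∀ n (j : Fin n) ω, 0 ≤ w n j ω) (hw1 : ∀ n ω, ∑ j, w n j ω = 1)
    (ν : Ω → Measure M) (hν : ∀ ω, IsProbabilityMeasure (ν ω))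
    (hcons : ∀ f : M → ℝ, Measurable f → (∃ C, ∀ y, |f y| ≤ C) →
      ∀ δ : ℝ, 0 < δ →
        Tendsto (fun n =>
            volume {ω : Ω | δ < |(∑ j : Fin n, w n j ω * f (Y j ω)) - ∫ y, f y ∂(ν ω)|})
          atTop (nhds 0)) :
    ∀ ε : ℝ, 0 < ε →
      Tendsto (fun n =>
          volume {ω : Ω | ∃ g : M → ℝ, (∀ y, |g y| ≤ 1) ∧
            (∀ y₁ y₂, |g y₁ - g y₂| ≤ dist y₁ y₂) ∧
            ε < |(∑ j : Fin n, w n j ω * g (Y j ω)) - ∫ y, g y ∂(ν ω)|})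
        atTop (nhds 0) := by
  intro ε hε
  set S : Set C(M, ℝ) := {f | LipschitzWith 1 f ∧ ∀ y, |f y| ≤ 1} with hSdef
  have hK : IsCompact S := stmt19_aux_compact
  have hε4 : (0:ℝ) < ε / 4 := by linarith
  obtain ⟨T, hTS, hTfin, hcover⟩ :=
    hK.elim_finite_subcover_image (b := S) (c := fun f => Metric.ball f (ε / 4))
      (fun f _ => Metric.isOpen_ball)
      (fun f hf => Set.mem_biUnion hf (Metric.mem_ball_self hε4))
  -- the finite net as a Finset
  classical
  set T' : Finset C(M, ℝ) := hTfin.toFinset with hT'def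
  have hT'mem : ∀ t : C(M, ℝ), t ∈ T' ↔ t ∈ T := fun t => hTfin.mem_toFinset
  -- for each net function, the consistency hypothesis with δ = ε/2
  have hA : ∀ t ∈ T', Tendsto (fun n =>
      volume {ω : Ω | ε / 2 < |(∑ j : Fin n, w n j ω * t (Y j ω)) - ∫ y, t y ∂(ν ω)|})
      atTop (nhds 0) := by
    intro t ht
    have htS : (t : C(M, ℝ)) ∈ S := hTS ((hT'mem t).1 ht)
    exact hcons t t.continuous.measurable ⟨1, htS.2⟩ (ε / 2) (by linarith)
  have hsum : Tendsto (fun n => ∑ t ∈ T', volume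
      {ω : Ω | ε / 2 < |(∑ j : Fin n, w n j ω * t (Y j ω)) - ∫ y, t y ∂(ν ω)|})
      atTop (nhds 0) := by
    have := tendsto_finset_sum T' hA
    simpa using this
  refine tendsto_of_tendsto_of_tendsto_of_le_of_le tendsto_const_nhds hsum
    (fun n => zero_le) (fun n => ?_)
  -- the key inclusion
  have hsub : {ω : Ω | ∃ g : M → ℝ, (∀ y, |g y| ≤ 1) ∧
      (∀ y₁ y₂, |g y₁ - g y₂| ≤ dist y₁ y₂) ∧
      ε < |(∑ j : Fin n, w n j ω * g (Y j ω)) - ∫ y, g y ∂(ν ω)|} ⊆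
      ⋃ t ∈ T', {ω : Ω | ε / 2 < |(∑ j : Fin n, w n j ω * t (Y j ω)) - ∫ y, t y ∂(ν ω)|} := by
    rintro ω ⟨g, hg1, hg2, hg3⟩
    have hglip : LipschitzWith 1 g :=
      LipschitzWith.of_dist_le_mul (fun x y => by
        simpa [Real.dist_eq] using hg2 x y)
    set gc : C(M, ℝ) := ⟨g, hglip.continuous⟩ with hgc
    have hgcS : gc ∈ S := ⟨hglip, hg1⟩
    obtain ⟨t, htT, htball⟩ := Set.mem_iUnion₂.1 (hcover hgcS)
    have hclose : ∀ y, |g y - t y| ≤ ε / 4 := by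
      have hd : dist gc t ≤ ε / 4 := le_of_lt (by simpa [Metric.mem_ball, dist_comm] using htball)
      intro y
      have := (ContinuousMap.dist_le (le_of_lt hε4)).1 hd y
      simp only [Real.dist_eq] at this
      exact this
    refine Set.mem_iUnion₂.2 ⟨t, (hT'mem t).2 htT, ?_⟩
    -- bound the sum part
    have hbound_sum : |(∑ j : Fin n, w n j ω * g (Y j ω)) - ∑ j : Fin n, w n j ω * t (Y j ω)|
        ≤ ε / 4 := by
      rw [← Finset.sum_sub_distrib]
      calc |∑ j : Fin n, (w n j ω * g (Y j ω) - w n j ω * t (Y j ω))|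
          ≤ ∑ j : Fin n, |w n j ω * g (Y j ω) - w n j ω * t (Y j ω)| :=
            Finset.abs_sum_le_sum_abs _ _
        _ ≤ ∑ j : Fin n, w n j ω * (ε / 4) := by
            refine Finset.sum_le_sum fun j _ => ?_
            rw [← mul_sub, abs_mul, abs_of_nonneg (hw0 n j ω)]
            exact mul_le_mul_of_nonneg_left (hclose (Y j ω)) (hw0 n j ω)
        _ = ε / 4 := by rw [← Finset.sum_mul, hw1 n ω, one_mul]
    -- bound the integral part
    have hνω := hν ω
    have hint : ∀ f : M → ℝ, Continuous f → Integrable f (ν ω) := by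
      intro f hf
      exact hf.integrable_of_hasCompactSupport
        (IsCompact.of_isClosed_subset isCompact_univ (isClosed_tsupport f) (Set.subset_univ _))
    have hbound_int : |(∫ y, t y ∂(ν ω)) - ∫ y, g y ∂(ν ω)| ≤ ε / 4 := by
      rw [← integral_sub (hint t t.continuous) (hint g hglip.continuous)]
      have := norm_integral_le_of_norm_le_const (μ := ν ω) (C := ε / 4)
        (f := fun y => t y - g y)
        (Filter.Eventually.of_forall fun y => by
          simpa [Real.norm_eq_abs, abs_sub_comm] using hclose y)
      simpa [Real.norm_eq_abs, measure_univ] using this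
    -- combine
    have key : |(∑ j : Fin n, w n j ω * g (Y j ω)) - ∫ y, g y ∂(ν ω)|
        ≤ |(∑ j : Fin n, w n j ω * t (Y j ω)) - ∫ y, t y ∂(ν ω)| + (ε / 4 + ε / 4) := by
      have h1 : (∑ j : Fin n, w n j ω * g (Y j ω)) - ∫ y, g y ∂(ν ω) =
          ((∑ j : Fin n, w n j ω * t (Y j ω)) - ∫ y, t y ∂(ν ω)) +
          (((∑ j : Fin n, w n j ω * g (Y j ω)) - ∑ j : Fin n, w n j ω * t (Y j ω)) +
            ((∫ y, t y ∂(ν ω)) - ∫ y, g y ∂(ν ω))) := by ring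
      rw [h1]
      calc _ ≤ |(∑ j : Fin n, w n j ω * t (Y j ω)) - ∫ y, t y ∂(ν ω)| +
            |((∑ j : Fin n, w n j ω * g (Y j ω)) - ∑ j : Fin n, w n j ω * t (Y j ω)) +
              ((∫ y, t y ∂(ν ω)) - ∫ y, g y ∂(ν ω))| := abs_add_le _ _
        _ ≤ _ := by
            gcongr
            exact (abs_add_le _ _).trans (add_le_add hbound_sum hbound_int)
    simp only [Set.mem_setOf_eq]
    have := lt_of_lt_of_le hg3 key
    linarith
  calc volume _ ≤ volume (⋃ t ∈ T',
        {ω : Ω | ε / 2 < |(∑ j : Fin n, w n j ω * t (Y j ω)) - ∫ y, t y ∂(ν ω)|}) :=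
      measure_mono hsub
    _ ≤ ∑ t ∈ T', volume
        {ω : Ω | ε / 2 < |(∑ j : Fin n, w n j ω * t (Y j ω)) - ∫ y, t y ∂(ν ω)|} :=
      measure_biUnion_finset_le T' _
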